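/- Let a and b be positive integers with gcd(a, b) = 1 and a ≤ b. Then there exist nonnegative integers m1, n1, m2, n2 with n1*m2 - m1*n2 = 1, a = m1 + m2, and b = n1 + n2; that is, every reduced fraction a/b with 0 < a/b ≤ 1 is the mediant of a unimodular pair of fractions. -/
import Mathlib


theorem reduced_is_mediant (a b : ℤ) (ha : 0 < a) (hb : 0 < b)
    (hcop : Int.gcd a b = 1) (hab : a ≤ b) :
    ∃ m1 n1 m2 n2 : ℤ, 0 ≤ m1 ∧ 0 ≤ n1 ∧ 0 ≤ m2 ∧ 0 ≤ n2 ∧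
      n1 * m2 - m1 * n2 = 1 ∧ a = m1 + m2 ∧ b = n1 + n2 := by
  have key : a * Int.gcdA a b + b * Int.gcdB a b = 1 := by
    have := Int.gcd_eq_gcd_ab a b
    rw [hcop] at this
    exact_mod_cast this.symm
  set u := Int.gcdA a b
  set v := Int.gcdB a b
  set m2 := (v - 1) % a + 1 with hm2def
  have hr0 : 0 ≤ (v - 1) % a := Int.emod_nonneg _ (ne_of_gt ha)
  have hrlt : (v - 1) % a < a := Int.emod_lt_of_pos _ ha
  have hm2pos : 1 ≤ m2 := by omega
  have hm2le : m2 ≤ a := by omega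
  have hmod : (v - 1) % a = v - 1 - a * ((v - 1) / a) := by
    rw [Int.emod_def]
  have hdvd : a ∣ b * m2 - 1 := by
    refine ⟨-(u + b * ((v - 1) / a)), ?_⟩
    rw [hm2def]
    linear_combination b * hmod + key
  set n2 := (b * m2 - 1) / a with hn2def
  have han2 : a * n2 = b * m2 - 1 := Int.mul_ediv_cancel' hdvd
  have hn2nonneg : 0 ≤ n2 := by
    have : 0 ≤ b * m2 - 1 := by nlinarith
    exact Int.ediv_nonneg this (le_of_lt ha)
  have hn2le : n2 ≤ b := by nlinarith
  refine ⟨a - m2, b - n2, m2, n2, by omega, by omega, by omega, hn2nonneg, ?_, by ring, by ring⟩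
  nlinarith [han2]
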